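/- Let M ∈ ℝ and, for |τ| small enough that |M·τ| < 1, let u_{M,τ} : ℝ → ℝ be the unique function with u_{M,τ}(θ) = M·cos(θ − τ·u_{M,τ}(θ)). Then for each fixed θ ∈ ℝ, the map τ ↦ u_{M,τ}(θ) is differentiable at τ = 0, with u_{M,0}(θ) = M·cos θ and (d/dτ) u_{M,τ}(θ)|_{τ=0} = (M²/2)·sin(2θ). -/

import Mathlib

open Real

lemma abs_cos_sub_cos_le (x y : ℝ) : |Real.cos x - Real.cos y| ≤ |x - y| := by
  rw [Real.cos_sub_cos]
  have h1 : |Real.sin ((x + y) / 2)| ≤ 1 := Real.abs_sin_le_one _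
  have h2 : |Real.sin ((x - y) / 2)| ≤ |(x - y) / 2| := Real.abs_sin_le_abs
  calc |(-2) * Real.sin ((x + y) / 2) * Real.sin ((x - y) / 2)|
      = 2 * |Real.sin ((x + y) / 2)| * |Real.sin ((x - y) / 2)| := by
        rw [abs_mul, abs_mul]; norm_num
    _ ≤ 2 * 1 * |(x - y) / 2| := by
        apply mul_le_mul _ h2 (abs_nonneg _) (by norm_num)
        nlinarith [abs_nonneg (Real.sin ((x + y) / 2))]
    _ = |x - y| := by rw [abs_div, abs_two]; ring

lemma abs_sin_sub_sin_le (x y : ℝ) : |Real.sin x - Real.sin y| ≤ |x - y| := by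
  rw [Real.sin_sub_sin]
  have h1 : |Real.cos ((x + y) / 2)| ≤ 1 := Real.abs_cos_le_one _
  have h2 : |Real.sin ((x - y) / 2)| ≤ |(x - y) / 2| := Real.abs_sin_le_abs
  calc |2 * Real.sin ((x - y) / 2) * Real.cos ((x + y) / 2)|
      = 2 * |Real.sin ((x - y) / 2)| * |Real.cos ((x + y) / 2)| := by
        rw [abs_mul, abs_mul]; norm_num
    _ ≤ 2 * |(x - y) / 2| * 1 := by
        apply mul_le_mul _ h1 (abs_nonneg _) (by positivity)
        nlinarith [abs_nonneg (Real.sin ((x - y) / 2))]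
    _ = |x - y| := by rw [abs_div, abs_two]; ring

lemma existsUnique_implicit (M τ θ : ℝ) (h : |M * τ| < 1) :
    ∃! u : ℝ, u = M * Real.cos (θ - τ * u) := by
  set f : ℝ → ℝ := fun u => M * Real.cos (θ - τ * u) with hf
  have key : ∀ u v : ℝ, |f u - f v| ≤ |M * τ| * |u - v| := by
    intro u v
    have hc := _root_.abs_cos_sub_cos_le (θ - τ * u) (θ - τ * v)
    calc |f u - f v| = |M| * |Real.cos (θ - τ * u) - Real.cos (θ - τ * v)| := by
          rw [hf]; rw [← abs_mul]; ring_nf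
      _ ≤ |M| * |θ - τ * u - (θ - τ * v)| := mul_le_mul_of_nonneg_left hc (abs_nonneg _)
      _ = |M * τ| * |u - v| := by
          rw [show θ - τ * u - (θ - τ * v) = τ * (v - u) from by ring, abs_mul, abs_mul,
            abs_sub_comm v u]; ring
  have hlip : LipschitzWith ‖M * τ‖₊ f := by
    apply LipschitzWith.of_dist_le_mul
    intro u v
    simp only [coe_nnnorm, Real.norm_eq_abs, Real.dist_eq]
    exact key u v
  have hK : ‖M * τ‖₊ < 1 := by
    rw [← NNReal.coe_lt_coe, coe_nnnorm, Real.norm_eq_abs, NNReal.coe_one]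
    exact h
  have hc : ContractingWith ‖M * τ‖₊ f := ⟨hK, hlip⟩
  refine ⟨hc.fixedPoint f, (hc.fixedPoint_isFixedPt).symm, ?_⟩
  intro v hv
  have huf : f (hc.fixedPoint f) = hc.fixedPoint f := hc.fixedPoint_isFixedPt
  have h1 : |f v - f (hc.fixedPoint f)| ≤ |M * τ| * |v - hc.fixedPoint f| :=
    key v (hc.fixedPoint f)
  rw [show f v = v from hv.symm, huf] at h1
  by_contra hne
  have hpos : 0 < |v - hc.fixedPoint f| := abs_pos.mpr (sub_ne_zero.mpr hne)
  nlinarith [abs_nonneg (M * τ)]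

open Classical in

/-- `implicitSol M τ θ` is the unique real `u` with `u = M * cos (θ - τ * u)`
(which exists and is unique whenever `|M * τ| < 1`), and `0` otherwise. -/
noncomputable def implicitSol (M τ θ : ℝ) : ℝ :=
  if h : ∃! u : ℝ, u = M * Real.cos (θ - τ * u) then h.choose else 0

lemma implicitSol_spec {M τ : ℝ} (θ : ℝ) (h : |M * τ| < 1) :
    implicitSol M τ θ = M * Real.cos (θ - τ * implicitSol M τ θ) := by
  have he := existsUnique_implicit M τ θ h
  rw [implicitSol, dif_pos he]
  exact he.choose_spec.1

lemma cos_taylor (a h : ℝ) :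
    |Real.cos (a - h) - Real.cos a - h * Real.sin a| ≤ h ^ 2 := by
  set f : ℝ → ℝ := fun t => Real.cos (a - t) - Real.cos a - t * Real.sin a with hf
  have hderiv : ∀ t : ℝ, HasDerivAt f (Real.sin (a - t) - Real.sin a) t := by
    intro t
    have h1 : HasDerivAt (fun t : ℝ => a - t) (-1) t := by
      simpa using (hasDerivAt_id t).const_sub a
    have h2 : HasDerivAt (fun t : ℝ => Real.cos (a - t)) (Real.sin (a - t)) t := by
      have := (Real.hasDerivAt_cos (a - t)).comp t h1
      rw [show Real.sin (a - t) = -Real.sin (a - t) * -1 by ring]; exact this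
    have h3 : HasDerivAt (fun t : ℝ => t * Real.sin a) (Real.sin a) t := by
      simpa using (hasDerivAt_id t).mul_const (Real.sin a)
    exact (h2.sub_const (Real.cos a)).sub h3
  have hs : Convex ℝ (Set.uIcc (0:ℝ) h) := convex_uIcc _ _
  have bound : ∀ t ∈ Set.uIcc (0:ℝ) h, ‖Real.sin (a - t) - Real.sin a‖ ≤ |h| := by
    intro t ht
    have hst := _root_.abs_sin_sub_sin_le (a - t) a
    have ht' : |t| ≤ |h| := by
      rcases Set.mem_uIcc.mp ht with ⟨h1, h2⟩ | ⟨h1, h2⟩ <;> rw [abs_le] <;>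
        constructor <;> cases abs_cases h <;> linarith
    calc ‖Real.sin (a - t) - Real.sin a‖ ≤ |a - t - a| := hst
      _ = |t| := by rw [show a - t - a = -t by ring, abs_neg]
      _ ≤ |h| := ht'
  have key := hs.norm_image_sub_le_of_norm_hasDerivWithin_le
    (fun t ht => (hderiv t).hasDerivWithinAt) bound
    (Set.left_mem_uIcc (a := (0:ℝ)) (b := h)) (Set.right_mem_uIcc (a := (0:ℝ)) (b := h))
  have hf0 : f 0 = 0 := by simp [hf]
  calc |Real.cos (a - h) - Real.cos a - h * Real.sin a| = ‖f h - f 0‖ := by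
        rw [hf0]; simp [hf, Real.norm_eq_abs]
    _ ≤ |h| * ‖h - 0‖ := key
    _ = h ^ 2 := by rw [Real.norm_eq_abs]; simp [← abs_mul, sq_abs, sq]

/-- For fixed `θ`, the map `τ ↦ u_{M,τ}(θ)` (with `u_{M,τ}` the unique
solution of the implicit equation `u = M * cos (θ - τ * u)`, valid for `|M * τ| < 1`) is
differentiable at `τ = 0`, with `u_{M,0}(θ) = M * cos θ` and derivative `(M²/2) * sin (2θ)`
(the second harmonic). -/
theorem implicitSol_deriv_at_zero (M θ : ℝ) :
    implicitSol M 0 θ = M * Real.cos θ ∧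
      HasDerivAt (fun τ : ℝ => implicitSol M τ θ) (M ^ 2 / 2 * Real.sin (2 * θ)) 0 := by
  have h0 : |M * (0:ℝ)| < 1 := by simp
  have hu0 : implicitSol M 0 θ = M * Real.cos θ := by
    have := implicitSol_spec θ h0
    simpa using this
  refine ⟨hu0, ?_⟩
  rw [hasDerivAt_iff_isLittleO_nhds_zero]
  have hδ : (0:ℝ) < 1 / (|M| + 1) := by positivity
  have hev : ∀ᶠ h in nhds (0:ℝ),
      ‖implicitSol M (0 + h) θ - implicitSol M 0 θ - h • (M ^ 2 / 2 * Real.sin (2 * θ))‖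
        ≤ 2 * |M| ^ 3 * ‖h ^ 2‖ := by
    filter_upwards [Metric.ball_mem_nhds (0:ℝ) hδ] with h hh
    have hh' : |h| < 1 / (|M| + 1) := by simpa [Real.dist_eq] using hh
    have hMh : |M * h| < 1 := by
      rw [abs_mul]
      calc |M| * |h| ≤ (|M| + 1) * |h| := by nlinarith [abs_nonneg h]
        _ < (|M| + 1) * (1 / (|M| + 1)) := by
            apply mul_lt_mul_of_pos_left hh'; positivity
        _ = 1 := by field_simp
    set u := implicitSol M h θ with hu
    have heq : u = M * Real.cos (θ - h * u) := implicitSol_spec θ hMh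
    have hub : |u| ≤ |M| := by
      rw [heq, abs_mul]
      nlinarith [Real.abs_cos_le_one (θ - h * u), abs_nonneg M]
    have hclose : |u - M * Real.cos θ| ≤ M ^ 2 * |h| := by
      have hcos : |Real.cos (θ - h * u) - Real.cos θ| ≤ |h * u| := by
        calc |Real.cos (θ - h * u) - Real.cos θ| ≤ |θ - h * u - θ| :=
              _root_.abs_cos_sub_cos_le _ _
          _ = |h * u| := by rw [show θ - h * u - θ = -(h*u) by ring, abs_neg]
      calc |u - M * Real.cos θ| = |M| * |Real.cos (θ - h * u) - Real.cos θ| := by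
            nth_rewrite 1 [heq]; rw [← abs_mul, mul_sub]
        _ ≤ |M| * |h * u| := mul_le_mul_of_nonneg_left hcos (abs_nonneg _)
        _ = |M| * (|h| * |u|) := by rw [abs_mul]
        _ ≤ |M| * (|h| * |M|) := by
            apply mul_le_mul_of_nonneg_left _ (abs_nonneg _)
            exact mul_le_mul_of_nonneg_left hub (abs_nonneg _)
        _ = M ^ 2 * |h| := by rw [← sq_abs]; ring
    have htay := cos_taylor θ (h * u)
    have hL : M ^ 2 / 2 * Real.sin (2 * θ) = M ^ 2 * (Real.sin θ * Real.cos θ) := by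
      rw [Real.sin_two_mul]; ring
    have hexp : u - M * Real.cos θ - h * (M ^ 2 / 2 * Real.sin (2 * θ))
        = M * (Real.cos (θ - h * u) - Real.cos θ - (h * u) * Real.sin θ)
          + M * h * Real.sin θ * (u - M * Real.cos θ) := by
      rw [hL]; nth_rewrite 1 [heq]; ring
    have hbound : |u - M * Real.cos θ - h * (M ^ 2 / 2 * Real.sin (2 * θ))|
        ≤ 2 * |M| ^ 3 * h ^ 2 := by
      rw [hexp]
      have t1 : |M * (Real.cos (θ - h * u) - Real.cos θ - (h * u) * Real.sin θ)|
          ≤ |M| * (h * u) ^ 2 := by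
        rw [abs_mul]
        exact mul_le_mul_of_nonneg_left htay (abs_nonneg _)
      have t2 : |M * h * Real.sin θ * (u - M * Real.cos θ)| ≤ |M| * |h| * (M ^ 2 * |h|) := by
        rw [abs_mul, abs_mul, abs_mul]
        have hs1 : |Real.sin θ| ≤ 1 := Real.abs_sin_le_one θ
        have := mul_le_mul (mul_le_mul_of_nonneg_left hs1 (by positivity : (0:ℝ) ≤ |M| * |h|))
          hclose (abs_nonneg _) (by positivity)
        simpa [mul_one] using this
      have hu2 : (h * u) ^ 2 ≤ h ^ 2 * M ^ 2 := by
        have : |h * u| ≤ |h| * |M| := by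
          rw [abs_mul]; exact mul_le_mul_of_nonneg_left hub (abs_nonneg _)
        nlinarith [sq_abs (h * u), sq_abs h, sq_abs M, abs_nonneg (h * u), abs_nonneg h,
          abs_nonneg M]
      calc |M * (Real.cos (θ - h * u) - Real.cos θ - (h * u) * Real.sin θ)
            + M * h * Real.sin θ * (u - M * Real.cos θ)|
          ≤ |M * (Real.cos (θ - h * u) - Real.cos θ - (h * u) * Real.sin θ)|
            + |M * h * Real.sin θ * (u - M * Real.cos θ)| := abs_add_le _ _
        _ ≤ |M| * (h ^ 2 * M ^ 2) + |M| * |h| * (M ^ 2 * |h|) := by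
            have := t1.trans (mul_le_mul_of_nonneg_left hu2 (abs_nonneg M))
            linarith [t2]
        _ = 2 * |M| ^ 3 * h ^ 2 := by
            rw [← sq_abs M, ← sq_abs h]; ring
    rw [zero_add, hu0, ← hu]
    simp only [smul_eq_mul, Real.norm_eq_abs]
    calc |u - M * Real.cos θ - h * (M ^ 2 / 2 * Real.sin (2 * θ))|
        ≤ 2 * |M| ^ 3 * h ^ 2 := hbound
      _ = 2 * |M| ^ 3 * |h ^ 2| := by rw [abs_of_nonneg (sq_nonneg h)]
  have hbigO : (fun h : ℝ => implicitSol M (0 + h) θ - implicitSol M 0 θ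
      - h • (M ^ 2 / 2 * Real.sin (2 * θ))) =O[nhds 0] fun h => h ^ 2 :=
    Asymptotics.IsBigO.of_bound _ hev
  exact hbigO.trans_isLittleO (Asymptotics.isLittleO_pow_id one_lt_two)
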